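/- Let n ≥ 1 be an integer, 0 < α < 1, and let K ⊂ ℝⁿ be compact. Then there exists a constant C = C(K,α,n) > 0 such that for every φ ∈ C_c^∞(ℝⁿ) with supp φ ⊂ K and every x ∈ ℝⁿ, the integral ∫_{ℝⁿ} (φ(x) − φ(y))/|x−y|^{n+α} dy is absolutely convergent and (1 + |x|^{n+α})·|∫_{ℝⁿ} (φ(x) − φ(y))/|x−y|^{n+α} dy| ≤ C·‖φ‖_{C²}, where ‖φ‖_{C²} = sup_{|β|≤2} sup_{z∈ℝⁿ} |∂^β φ(z)|. (This is the decay estimate showing that the fractional Laplacian (−Δ)^{α/2}f, defined in the distributional sense, is a distribution of order at most 2 for f ∈ L¹_α(ℝⁿ).) -/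

import Mathlib

open MeasureTheory

open MeasureTheory Metric Set Module
open scoped ENNReal

lemma frac_aux_measurable (n : ℕ) (s : ℝ) :
    Measurable (fun z : EuclideanSpace ℝ (Fin n) => ‖z‖ ^ s) := by
  rcases le_or_gt 0 s with h | h
  · exact (continuous_norm.rpow_const fun z => Or.inr h).measurable
  · have hs : (fun z : EuclideanSpace ℝ (Fin n) => ‖z‖ ^ s)
        = fun z => (‖z‖ ^ (-s))⁻¹ := by
      funext z
      rcases eq_or_ne z 0 with hz | hz
      · simp [hz, Real.zero_rpow h.ne, Real.zero_rpow (neg_ne_zero.2 h.ne)]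
      · rw [← Real.rpow_neg (norm_nonneg _), neg_neg]
    rw [hs]
    exact ((continuous_norm.rpow_const fun z => Or.inr (by linarith)).measurable).inv

lemma frac_aux_ball (n : ℕ) (hn : 1 ≤ n) {r : ℝ} (hrn : -(n : ℝ) < r) (hr0 : r < 0) :
    IntegrableOn (fun z : EuclideanSpace ℝ (Fin n) => ‖z‖ ^ r)
      (closedBall (0 : EuclideanSpace ℝ (Fin n)) 1) := by
  constructor
  · exact (frac_aux_measurable n r).aestronglyMeasurable
  · rw [hasFiniteIntegral_iff_ofReal (ae_of_all _ fun z => Real.rpow_nonneg (norm_nonneg _) r)]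
    set b : ℝ := (2 : ℝ)⁻¹ with hbdef
    have hb : (0 : ℝ) < b := by norm_num [hbdef]
    have hb1 : b < 1 := by norm_num [hbdef]
    set ρ : ℕ → ℝ := fun k => b ^ k with hρ
    have hρpos : ∀ k, 0 < ρ k := fun k => pow_pos hb k
    set A : ℕ → Set (EuclideanSpace ℝ (Fin n)) :=
      fun k => closedBall 0 (ρ k) \ closedBall 0 (ρ (k + 1)) with hA
    have hcover : closedBall (0 : EuclideanSpace ℝ (Fin n)) 1 ⊆ {0} ∪ ⋃ k, A k := by
      intro z hz
      rcases eq_or_ne z 0 with h | h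
      · exact Or.inl h
      · right
        have hz1 : ‖z‖ ≤ 1 := mem_closedBall_zero_iff.1 hz
        have hzpos : 0 < ‖z‖ := norm_pos_iff.2 h
        have hex : ∃ k, ρ k < ‖z‖ := by
          have ht : Filter.Tendsto ρ Filter.atTop (nhds 0) :=
            tendsto_pow_atTop_nhds_zero_of_lt_one hb.le hb1
          exact (ht.eventually_lt_const hzpos).exists
        classical
        have hk : ρ (Nat.find hex) < ‖z‖ := Nat.find_spec hex
        have hk0 : Nat.find hex ≠ 0 := by
          intro h0
          rw [h0] at hk
          simp only [hρ, pow_zero] at hk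
          linarith
        obtain ⟨m, hm⟩ := Nat.exists_eq_succ_of_ne_zero hk0
        have hmin : ¬ ρ m < ‖z‖ := Nat.find_min hex (by omega)
        rw [hm, Nat.succ_eq_add_one] at hk
        refine mem_iUnion.2 ⟨m, mem_closedBall_zero_iff.2 (not_lt.1 hmin), fun hc => ?_⟩
        have : ‖z‖ ≤ ρ (m + 1) := mem_closedBall_zero_iff.1 hc
        linarith
    set q : ℝ := b ^ (r + (n : ℝ)) with hq
    have hq0 : 0 < q := Real.rpow_pos_of_pos hb _
    have hq1 : q < 1 := Real.rpow_lt_one hb.le hb1 (by linarith)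
    set V : ℝ≥0∞ := volume (ball (0 : EuclideanSpace ℝ (Fin n)) 1) with hV
    have key : ∀ k, ∫⁻ z in A k, ENNReal.ofReal (‖z‖ ^ r) ≤
        ENNReal.ofReal (b ^ r) * ENNReal.ofReal (q ^ k) * V := by
      intro k
      have h1 : ∫⁻ z in A k, ENNReal.ofReal (‖z‖ ^ r) ≤
          ∫⁻ _ in A k, ENNReal.ofReal (ρ (k + 1) ^ r) := by
        refine setLIntegral_mono' (measurableSet_closedBall.diff measurableSet_closedBall)
          (fun z hz => ENNReal.ofReal_le_ofReal ?_)
        have hzlt : ρ (k + 1) < ‖z‖ := by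
          by_contra hcon
          exact hz.2 (mem_closedBall_zero_iff.2 (not_lt.1 hcon))
        exact Real.rpow_le_rpow_of_nonpos (hρpos (k + 1)) hzlt.le hr0.le
      have h2 : (∫⁻ _ in A k, ENNReal.ofReal (ρ (k + 1) ^ r)) =
          ENNReal.ofReal (ρ (k + 1) ^ r) * volume (A k) := setLIntegral_const _ _
      have h3 : volume (A k) ≤ ENNReal.ofReal (ρ k ^ n) * V := by
        calc volume (A k) ≤ volume (closedBall (0 : EuclideanSpace ℝ (Fin n)) (ρ k)) :=
              measure_mono diff_subset
          _ = ENNReal.ofReal (ρ k ^ finrank ℝ (EuclideanSpace ℝ (Fin n))) * V :=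
              Measure.addHaar_closedBall _ _ (hρpos k).le
          _ = ENNReal.ofReal (ρ k ^ n) * V := by rw [finrank_euclideanSpace_fin]
      have hexp : ρ (k + 1) ^ r * ρ k ^ n = b ^ r * q ^ k := by
        simp only [hρ, hq]
        rw [← pow_mul, ← Real.rpow_natCast b (k + 1), ← Real.rpow_natCast b (k * n),
          ← Real.rpow_mul hb.le, ← Real.rpow_add hb,
          ← Real.rpow_natCast (b ^ (r + (n : ℝ))) k, ← Real.rpow_mul hb.le,
          ← Real.rpow_add hb]
        congr 1
        push_cast
        ring
      calc ∫⁻ z in A k, ENNReal.ofReal (‖z‖ ^ r)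
          ≤ ENNReal.ofReal (ρ (k + 1) ^ r) * volume (A k) := h1.trans_eq h2
        _ ≤ ENNReal.ofReal (ρ (k + 1) ^ r) * (ENNReal.ofReal (ρ k ^ n) * V) :=
            mul_le_mul_right h3 _
        _ = ENNReal.ofReal (ρ (k + 1) ^ r * ρ k ^ n) * V := by
            rw [ENNReal.ofReal_mul (Real.rpow_nonneg (hρpos (k + 1)).le r), mul_assoc]
        _ = ENNReal.ofReal (b ^ r) * ENNReal.ofReal (q ^ k) * V := by
            rw [hexp, ENNReal.ofReal_mul (Real.rpow_nonneg hb.le r)]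
    have hsum : ∑' k, (ENNReal.ofReal (b ^ r) * ENNReal.ofReal (q ^ k) * V) =
        ENNReal.ofReal (b ^ r) * V * ∑' k, ENNReal.ofReal q ^ k := by
      rw [← ENNReal.tsum_mul_left]
      congr 1
      funext k
      rw [ENNReal.ofReal_pow hq0.le]
      ring
    calc ∫⁻ z in closedBall (0 : EuclideanSpace ℝ (Fin n)) 1, ENNReal.ofReal (‖z‖ ^ r)
        ≤ ∫⁻ z in ({0} : Set (EuclideanSpace ℝ (Fin n))) ∪ ⋃ k, A k,
            ENNReal.ofReal (‖z‖ ^ r) := lintegral_mono_set hcover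
      _ ≤ (∫⁻ z in ({0} : Set (EuclideanSpace ℝ (Fin n))), ENNReal.ofReal (‖z‖ ^ r)) +
            ∫⁻ z in ⋃ k, A k, ENNReal.ofReal (‖z‖ ^ r) := lintegral_union_le _ _ _
      _ = ∫⁻ z in ⋃ k, A k, ENNReal.ofReal (‖z‖ ^ r) := by
          rw [lintegral_singleton]
          simp [Real.zero_rpow hr0.ne]
      _ ≤ ∑' k, ∫⁻ z in A k, ENNReal.ofReal (‖z‖ ^ r) := lintegral_iUnion_le _ _
      _ ≤ ∑' k, (ENNReal.ofReal (b ^ r) * ENNReal.ofReal (q ^ k) * V) :=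
          ENNReal.tsum_le_tsum key
      _ = ENNReal.ofReal (b ^ r) * V * ∑' k, ENNReal.ofReal q ^ k := hsum
      _ = ENNReal.ofReal (b ^ r) * V * (1 - ENNReal.ofReal q)⁻¹ := by
          rw [ENNReal.tsum_geometric]
      _ < ⊤ := by
          have hne : (1 : ℝ≥0∞) - ENNReal.ofReal q ≠ 0 := by
            rw [Ne, tsub_eq_zero_iff_le, not_le]
            exact ENNReal.ofReal_lt_one.2 hq1
          have hVlt : V < ⊤ := by rw [hV]; exact measure_ball_lt_top
          exact ENNReal.mul_lt_top (ENNReal.mul_lt_top ENNReal.ofReal_lt_top hVlt)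
            (lt_top_iff_ne_top.2 (ENNReal.inv_ne_top.2 hne))

lemma frac_aux_compl (n : ℕ) {s : ℝ} (hs : (n : ℝ) < -s) :
    IntegrableOn (fun z : EuclideanSpace ℝ (Fin n) => ‖z‖ ^ s)
      (closedBall (0 : EuclideanSpace ℝ (Fin n)) 1)ᶜ := by
  have hs0 : s < 0 := by
    have : (0 : ℝ) ≤ (n : ℝ) := Nat.cast_nonneg n
    linarith
  have h1 : Integrable (fun z : EuclideanSpace ℝ (Fin n) => (1 + ‖z‖) ^ s) := by
    have := integrable_one_add_norm (E := EuclideanSpace ℝ (Fin n)) (μ := volume) (r := -s)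
      (by rw [finrank_euclideanSpace_fin]; exact hs)
    simpa using this
  refine Integrable.mono' ((h1.const_mul ((2 : ℝ) ^ (-s))).integrableOn)
    ((frac_aux_measurable n s).aestronglyMeasurable) ?_
  refine (ae_restrict_iff' measurableSet_closedBall.compl).2 (ae_of_all _ fun z hz => ?_)
  have hz1 : 1 < ‖z‖ := by
    by_contra hcon
    exact hz (mem_closedBall_zero_iff.2 (not_lt.1 hcon))
  have h2z : 1 + ‖z‖ ≤ 2 * ‖z‖ := by linarith
  have hle : ((2 : ℝ) * ‖z‖) ^ s ≤ (1 + ‖z‖) ^ s :=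
    Real.rpow_le_rpow_of_nonpos (by linarith) h2z hs0.le
  have hmul : ((2 : ℝ) * ‖z‖) ^ s = 2 ^ s * ‖z‖ ^ s :=
    Real.mul_rpow (by norm_num) (norm_nonneg z)
  have h2s : (2 : ℝ) ^ (-s) * 2 ^ s = 1 := by
    rw [← Real.rpow_add two_pos]
    simp
  rw [Real.norm_eq_abs, abs_of_nonneg (Real.rpow_nonneg (norm_nonneg z) s)]
  calc ‖z‖ ^ s = (2 : ℝ) ^ (-s) * (2 ^ s * ‖z‖ ^ s) := by rw [← mul_assoc, h2s, one_mul]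
    _ = (2 : ℝ) ^ (-s) * ((2 : ℝ) * ‖z‖) ^ s := by rw [hmul]
    _ ≤ (2 : ℝ) ^ (-s) * (1 + ‖z‖) ^ s :=
        mul_le_mul_of_nonneg_left hle (Real.rpow_nonneg (by norm_num) _)

/-- For `n ≥ 1`, `0 < α < 1`, and a compact set `K ⊂ ℝⁿ`, there is a
constant `C = C(K,α,n) > 0` such that for every `φ ∈ C_c^∞(ℝⁿ)` with `supp φ ⊆ K` and
every `x ∈ ℝⁿ`, the integral `∫ (φ(x) − φ(y))/|x−y|^{n+α} dy` is absolutely convergent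
and `(1 + |x|^{n+α})·|∫ (φ(x) − φ(y))/|x−y|^{n+α} dy| ≤ C‖φ‖_{C²}`, where the `C²` norm
is the supremum over `ℝⁿ` of the derivatives of `φ` up to order `2`. -/
theorem fractional_laplacian_decay (n : ℕ) (hn : 1 ≤ n) (α : ℝ) (h0 : 0 < α) (h1 : α < 1)
    (K : Set (EuclideanSpace ℝ (Fin n))) (hK : IsCompact K) :
    ∃ C > 0, ∀ φ : EuclideanSpace ℝ (Fin n) → ℝ,
      ContDiff ℝ (⊤ : ℕ∞) φ → HasCompactSupport φ → tsupport φ ⊆ K →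
      ∀ x : EuclideanSpace ℝ (Fin n),
        Integrable (fun y : EuclideanSpace ℝ (Fin n) =>
          (φ x - φ y) / ‖x - y‖ ^ ((n : ℝ) + α)) ∧
        (1 + ‖x‖ ^ ((n : ℝ) + α)) *
            |∫ y : EuclideanSpace ℝ (Fin n), (φ x - φ y) / ‖x - y‖ ^ ((n : ℝ) + α)| ≤
          C * (⨆ i : Fin 3, ⨆ z : EuclideanSpace ℝ (Fin n),
            ‖iteratedFDeriv ℝ (i : ℕ) φ z‖) := by
  classical
  have hn1 : (1 : ℝ) ≤ (n : ℝ) := by exact_mod_cast hn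
  set c : ℝ := (n : ℝ) + α with hc
  have hc0 : 0 < c := by rw [hc]; linarith
  have hc1 : 1 < c := by rw [hc]; linarith
  have hcn : (n : ℝ) < c := by rw [hc]; linarith
  obtain ⟨R₀, hR₀⟩ := hK.isBounded.subset_closedBall 0
  set R : ℝ := max R₀ 1 with hR
  have hR1 : (1 : ℝ) ≤ R := le_max_right _ _
  have hKR : K ⊆ closedBall (0 : EuclideanSpace ℝ (Fin n)) R :=
    hR₀.trans (closedBall_subset_closedBall (le_max_left _ _))
  -- the fixed comparison profile
  set b₀ : EuclideanSpace ℝ (Fin n) → ℝ := fun z =>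
    (closedBall (0 : EuclideanSpace ℝ (Fin n)) 1).indicator (fun z => ‖z‖ ^ (1 - c)) z +
    ((closedBall (0 : EuclideanSpace ℝ (Fin n)) 1)ᶜ).indicator (fun z => 2 * ‖z‖ ^ (-c)) z
    with hb₀def
  have hball : IntegrableOn (fun z : EuclideanSpace ℝ (Fin n) => ‖z‖ ^ (1 - c))
      (closedBall 0 1) := frac_aux_ball n hn (by rw [hc]; linarith) (by linarith)
  have hcompl : IntegrableOn (fun z : EuclideanSpace ℝ (Fin n) => 2 * ‖z‖ ^ (-c))
      (closedBall 0 1)ᶜ :=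
    (frac_aux_compl n (by rw [neg_neg]; exact hcn)).const_mul 2
  have hb₀int : Integrable b₀ :=
    (hball.integrable_indicator measurableSet_closedBall).add
      (hcompl.integrable_indicator measurableSet_closedBall.compl)
  have hb₀nonneg : ∀ z, 0 ≤ b₀ z := by
    intro z
    refine add_nonneg (indicator_nonneg (fun a _ => Real.rpow_nonneg (norm_nonneg a) _) z)
      (indicator_nonneg (fun a _ => by positivity) z)
  set I₁ : ℝ := ∫ z, b₀ z with hI₁
  have hI₁0 : 0 ≤ I₁ := integral_nonneg hb₀nonneg
  set V : ℝ := (volume (closedBall (0 : EuclideanSpace ℝ (Fin n)) R)).toReal with hV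
  have hV0 : 0 ≤ V := ENNReal.toReal_nonneg
  have hA0 : (0 : ℝ) ≤ 1 + (2 * R) ^ c := by positivity
  have h2c0 : (0 : ℝ) < 2 ^ (c + 1) := Real.rpow_pos_of_pos two_pos _
  set C : ℝ := (1 + (2 * R) ^ c) * I₁ + 2 ^ (c + 1) * V + 1 with hC
  have hC0 : 0 < C := by
    rw [hC]
    have ha : 0 ≤ (1 + (2 * R) ^ c) * I₁ := mul_nonneg hA0 hI₁0
    have hb : 0 ≤ 2 ^ (c + 1) * V := mul_nonneg h2c0.le hV0
    linarith
  refine ⟨C, hC0, fun φ hφ hφc hφK x => ?_⟩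
  set M : ℝ := ⨆ i : Fin 3, ⨆ z : EuclideanSpace ℝ (Fin n), ‖iteratedFDeriv ℝ (i : ℕ) φ z‖
    with hM
  have hM0 : 0 ≤ M :=
    Real.iSup_nonneg fun i => Real.iSup_nonneg fun z => norm_nonneg _
  have hbdd : ∀ i : Fin 3, BddAbove (range fun z : EuclideanSpace ℝ (Fin n) =>
      ‖iteratedFDeriv ℝ (i : ℕ) φ z‖) := fun i =>
    ((hφ.continuous_iteratedFDeriv (mod_cast le_top)).norm).bddAbove_range_of_hasCompactSupport
      (hφc.iteratedFDeriv _).norm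
  have key : ∀ (i : Fin 3) (z : EuclideanSpace ℝ (Fin n)),
      ‖iteratedFDeriv ℝ (i : ℕ) φ z‖ ≤ M := by
    intro i z
    have h1 := le_ciSup (hbdd i) z
    have h2 := le_ciSup (f := fun j : Fin 3 =>
      ⨆ z : EuclideanSpace ℝ (Fin n), ‖iteratedFDeriv ℝ (j : ℕ) φ z‖)
      (Finite.bddAbove_range _) i
    rw [hM]
    exact h1.trans h2
  have hφ_bd : ∀ z, |φ z| ≤ M := by
    intro z
    have h := key 0 z
    rwa [show ((0 : Fin 3) : ℕ) = 0 from rfl, norm_iteratedFDeriv_zero,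
      Real.norm_eq_abs] at h
  have hfd_bd : ∀ z, ‖fderiv ℝ φ z‖ ≤ M := by
    intro z
    have h := key 1 z
    have h1 : ‖iteratedFDeriv ℝ (0 + 1) φ z‖ = ‖fderiv ℝ φ z‖ := by
      rw [← norm_iteratedFDeriv_fderiv, norm_iteratedFDeriv_zero]
    rwa [show ((1 : Fin 3) : ℕ) = 0 + 1 from rfl, h1] at h
  have lip : ∀ a y : EuclideanSpace ℝ (Fin n), |φ a - φ y| ≤ M * ‖a - y‖ := by
    intro a y
    have := convex_univ.norm_image_sub_le_of_norm_fderiv_le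
      (fun z _ => (hφ.differentiable (by simp)).differentiableAt)
      (fun z _ => hfd_bd z) (mem_univ y) (mem_univ a)
    simpa [Real.norm_eq_abs] using this
  set g : EuclideanSpace ℝ (Fin n) → ℝ := fun y => (φ x - φ y) / ‖x - y‖ ^ c with hg
  have meas_den : Continuous (fun y : EuclideanSpace ℝ (Fin n) => ‖x - y‖ ^ c) :=
    ((continuous_const.sub continuous_id).norm).rpow_const (fun y => Or.inr hc0.le)
  have meas_g : AEStronglyMeasurable g volume :=
    (((continuous_const.sub hφ.continuous).measurable).div
      meas_den.measurable).aestronglyMeasurable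
  have hbound : ∀ y, |g y| ≤ M * b₀ (y - x) := by
    intro y
    by_cases hyx : y = x
    · subst hyx
      have : g y = 0 := by simp [hg]
      rw [this, abs_zero]
      exact mul_nonneg hM0 (hb₀nonneg _)
    · have hxy : 0 < ‖x - y‖ := by
        rw [norm_pos_iff, sub_ne_zero]
        exact fun h => hyx h.symm
      have hden : 0 < ‖x - y‖ ^ c := Real.rpow_pos_of_pos hxy c
      have habsg : |g y| = |φ x - φ y| / ‖x - y‖ ^ c := by
        rw [hg, abs_div, abs_of_pos hden]
      by_cases hmem : y - x ∈ closedBall (0 : EuclideanSpace ℝ (Fin n)) 1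
      · have hb₀val : b₀ (y - x) = ‖y - x‖ ^ (1 - c) := by
          have h2 : (y - x) ∉ (closedBall (0 : EuclideanSpace ℝ (Fin n)) 1)ᶜ :=
            notMem_compl_iff.2 hmem
          simp only [hb₀def, indicator_of_mem hmem, indicator_of_notMem h2, add_zero]
        rw [habsg, hb₀val]
        calc |φ x - φ y| / ‖x - y‖ ^ c ≤ (M * ‖x - y‖) / ‖x - y‖ ^ c :=
              (div_le_div_iff_of_pos_right hden).mpr (lip x y)
          _ = M * ‖x - y‖ ^ (1 - c) := by
              rw [Real.rpow_sub hxy, Real.rpow_one, mul_div_assoc]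
          _ = M * ‖y - x‖ ^ (1 - c) := by rw [norm_sub_rev]
      · have hb₀val : b₀ (y - x) = 2 * ‖y - x‖ ^ (-c) := by
          have h2 : (y - x) ∈ (closedBall (0 : EuclideanSpace ℝ (Fin n)) 1)ᶜ :=
            mem_compl hmem
          simp only [hb₀def, indicator_of_notMem hmem, indicator_of_mem h2, zero_add]
        have hnum : |φ x - φ y| ≤ 2 * M := by
          calc |φ x - φ y| ≤ |φ x| + |φ y| := abs_sub _ _
            _ ≤ M + M := add_le_add (hφ_bd x) (hφ_bd y)
            _ = 2 * M := by ring
        rw [habsg, hb₀val]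
        calc |φ x - φ y| / ‖x - y‖ ^ c ≤ (2 * M) / ‖x - y‖ ^ c :=
              (div_le_div_iff_of_pos_right hden).mpr hnum
          _ = M * (2 * (‖x - y‖ ^ c)⁻¹) := by rw [div_eq_mul_inv]; ring
          _ = M * (2 * ‖y - x‖ ^ (-c)) := by
              rw [norm_sub_rev, Real.rpow_neg (norm_nonneg _)]
  have hbint : Integrable (fun y => M * b₀ (y - x)) :=
    (hb₀int.comp_sub_right x).const_mul M
  have int_g : Integrable g := by
    refine Integrable.mono' hbint meas_g (ae_of_all _ fun y => ?_)
    rw [Real.norm_eq_abs]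
    exact hbound y
  refine ⟨int_g, ?_⟩
  have habs : |∫ y, g y| ≤ ∫ y, |g y| := by
    simpa [Real.norm_eq_abs] using norm_integral_le_integral_norm g
  rcases le_or_gt ‖x‖ (2 * R) with h2R | h2R
  · -- x in the bounded region
    have hIA : ∫ y, |g y| ≤ M * I₁ := by
      have hmono : ∫ y, |g y| ≤ ∫ y, M * b₀ (y - x) :=
        integral_mono int_g.abs hbint hbound
      rwa [integral_const_mul, integral_sub_right_eq_self b₀ x, ← hI₁] at hmono
    have h1x : 1 + ‖x‖ ^ c ≤ 1 + (2 * R) ^ c := by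
      have := Real.rpow_le_rpow (norm_nonneg x) h2R hc0.le
      linarith
    have habs' : |∫ y, g y| ≤ M * I₁ := habs.trans hIA
    calc (1 + ‖x‖ ^ c) * |∫ y, g y| ≤ (1 + (2 * R) ^ c) * (M * I₁) :=
          mul_le_mul h1x habs' (abs_nonneg _) hA0
      _ = ((1 + (2 * R) ^ c) * I₁) * M := by ring
      _ ≤ C * M := by
          refine mul_le_mul_of_nonneg_right ?_ hM0
          rw [hC]
          have hb : 0 ≤ 2 ^ (c + 1) * V := mul_nonneg h2c0.le hV0
          linarith
  · -- x far away
    have hRx : R < ‖x‖ := by linarith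
    have hx1 : (1 : ℝ) ≤ ‖x‖ := by linarith
    have hφx : φ x = 0 := by
      refine image_eq_zero_of_notMem_tsupport (fun hmem => ?_)
      have := mem_closedBall_zero_iff.1 (hKR (hφK hmem))
      linarith
    have hX1 : (1 : ℝ) ≤ ‖x‖ ^ c := Real.one_le_rpow hx1 hc0.le
    have hX0 : (0 : ℝ) < ‖x‖ ^ c := lt_of_lt_of_le one_pos hX1
    set D : ℝ := M * (2 ^ c * (‖x‖ ^ c)⁻¹) with hD
    have hbnd2 : ∀ y, |g y| ≤
        (closedBall (0 : EuclideanSpace ℝ (Fin n)) R).indicator (fun _ => D) y := by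
      intro y
      by_cases hy : y ∈ closedBall (0 : EuclideanSpace ℝ (Fin n)) R
      · rw [indicator_of_mem hy]
        have hyR : ‖y‖ ≤ R := mem_closedBall_zero_iff.1 hy
        have hxy2 : ‖x‖ / 2 ≤ ‖x - y‖ := by
          have := norm_sub_norm_le x y
          linarith
        have hxy0 : 0 < ‖x - y‖ := lt_of_lt_of_le (by linarith) hxy2
        have hdenle : (‖x‖ / 2) ^ c ≤ ‖x - y‖ ^ c :=
          Real.rpow_le_rpow (by linarith) hxy2 hc0.le
        have hdenpos : 0 < (‖x‖ / 2) ^ c := Real.rpow_pos_of_pos (by linarith) c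
        have hnum : |φ x - φ y| ≤ M := by
          rw [hφx, zero_sub, abs_neg]
          exact hφ_bd y
        calc |g y| = |φ x - φ y| / ‖x - y‖ ^ c := by
              rw [hg, abs_div, abs_of_pos (Real.rpow_pos_of_pos hxy0 c)]
          _ ≤ M / (‖x‖ / 2) ^ c := div_le_div₀ hM0 hnum hdenpos hdenle
          _ = D := by
              rw [hD, Real.div_rpow (norm_nonneg x) (by norm_num : (0:ℝ) ≤ 2),
                div_div_eq_mul_div, div_eq_mul_inv, mul_assoc,
                mul_comm ((2:ℝ) ^ c) ((‖x‖ ^ c)⁻¹)]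
      · rw [indicator_of_notMem hy]
        have hφy : φ y = 0 :=
          image_eq_zero_of_notMem_tsupport (fun hmem => hy (hKR (hφK hmem)))
        simp [hg, hφx, hφy]
    have hind : Integrable
        ((closedBall (0 : EuclideanSpace ℝ (Fin n)) R).indicator (fun _ => D)) :=
      (integrableOn_const measure_closedBall_lt_top.ne).integrable_indicator
        measurableSet_closedBall
    have hIB : ∫ y, |g y| ≤ V * D := by
      have hmono := integral_mono int_g.abs hind hbnd2
      rwa [integral_indicator_const _ measurableSet_closedBall, smul_eq_mul, measureReal_def, ← hV] at hmono
    have hXfrac : (1 + ‖x‖ ^ c) * (‖x‖ ^ c)⁻¹ ≤ 2 := by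
      have hXi : (‖x‖ ^ c)⁻¹ ≤ 1 := by
        rw [inv_eq_one_div]
        exact div_le_one_of_le₀ hX1 (by linarith)
      have hXX : ‖x‖ ^ c * (‖x‖ ^ c)⁻¹ = 1 := mul_inv_cancel₀ hX0.ne'
      calc (1 + ‖x‖ ^ c) * (‖x‖ ^ c)⁻¹ = (‖x‖ ^ c)⁻¹ + ‖x‖ ^ c * (‖x‖ ^ c)⁻¹ := by ring
        _ = (‖x‖ ^ c)⁻¹ + 1 := by rw [hXX]
        _ ≤ 2 := by linarith
    have h2c1 : (2 : ℝ) ^ (c + 1) = 2 ^ c * 2 := by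
      rw [Real.rpow_add two_pos, Real.rpow_one]
    have h2cpos : (0 : ℝ) < 2 ^ c := Real.rpow_pos_of_pos two_pos c
    calc (1 + ‖x‖ ^ c) * |∫ y, g y| ≤ (1 + ‖x‖ ^ c) * (V * D) :=
          mul_le_mul_of_nonneg_left (habs.trans hIB) (by linarith)
      _ = (M * 2 ^ c * V) * ((1 + ‖x‖ ^ c) * (‖x‖ ^ c)⁻¹) := by rw [hD]; ring
      _ ≤ (M * 2 ^ c * V) * 2 :=
          mul_le_mul_of_nonneg_left hXfrac
            (mul_nonneg (mul_nonneg hM0 h2cpos.le) hV0)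
      _ = (2 ^ c * 2 * V) * M := by ring
      _ ≤ C * M := by
          refine mul_le_mul_of_nonneg_right ?_ hM0
          rw [hC, h2c1]
          have ha : 0 ≤ (1 + (2 * R) ^ c) * I₁ := mul_nonneg hA0 hI₁0
          linarith
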